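/- Let u, v ∈ K with ‖u‖ ≤ 1 and ‖v‖ ≤ 1, and let ε be a real number with ‖u − v‖ ≤ ε ≤ p^{−1/(p−1)}. Then for every integer i ≥ 1 one has ‖u^i/i − v^i/i‖ ≤ ε, where i denotes the image of the natural number i in K (which is nonzero). -/

import Mathlib

section aux
variable {K : Type*} [NormedField K]

lemma aux_norm_sum_le (hna : IsNonarchimedean (fun x : K => ‖x‖))
    {ι : Type*} (s : Finset ι) (f : ι → K) {c : ℝ} (hc : 0 ≤ c)
    (h : ∀ i ∈ s, ‖f i‖ ≤ c) : ‖∑ i ∈ s, f i‖ ≤ c := by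
  classical
  induction s using Finset.induction with
  | empty => simpa
  | insert a s' hx ih =>
    rw [Finset.sum_insert hx]
    exact (hna _ _).trans (max_le (h _ (Finset.mem_insert_self _ _))
      (ih fun i hi => h i (Finset.mem_insert_of_mem hi)))

lemma aux_norm_natCast_le_one (hna : IsNonarchimedean (fun x : K => ‖x‖)) (n : ℕ) :
    ‖(n : K)‖ ≤ 1 := by
  induction n with
  | zero => simp
  | succ m ih =>
    push_cast
    exact (hna _ _).trans (max_le ih (by simp))

lemma aux_pow_sub_pow (hna : IsNonarchimedean (fun x : K => ‖x‖))
    (u v : K) (hu : ‖u‖ ≤ 1) (hv : ‖v‖ ≤ 1) (m : ℕ) :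
    ‖u ^ m - v ^ m‖ ≤ ‖u - v‖ := by
  induction m with
  | zero => simp
  | succ n ih =>
    have h : u ^ (n + 1) - v ^ (n + 1) = u ^ n * (u - v) + (u ^ n - v ^ n) * v := by ring
    rw [h]
    refine (hna _ _).trans (max_le ?_ ?_)
    · show ‖u ^ n * (u - v)‖ ≤ _
      rw [norm_mul]
      calc ‖u ^ n‖ * ‖u - v‖ ≤ 1 * ‖u - v‖ := by
            gcongr; exact (norm_pow u n ▸ pow_le_one₀ (norm_nonneg u) hu)
        _ = ‖u - v‖ := one_mul _
    · show ‖(u ^ n - v ^ n) * v‖ ≤ _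
      rw [norm_mul]
      calc ‖u ^ n - v ^ n‖ * ‖v‖ ≤ ‖u - v‖ * 1 := by gcongr
        _ = ‖u - v‖ := mul_one _

lemma aux_pow_p_step (p : ℕ) [hp : Fact p.Prime]
    (hna : IsNonarchimedean (fun x : K => ‖x‖))
    (hpK : ‖(p : K)‖ ≤ (p : ℝ)⁻¹)
    (u v : K) (hu : ‖u‖ ≤ 1) (hv : ‖v‖ ≤ 1)
    (ε : ℝ) (huv : ‖u - v‖ ≤ ε) (hε : ε ≤ (p : ℝ) ^ (-1 / ((p : ℝ) - 1))) :
    ‖u ^ p - v ^ p‖ ≤ (p : ℝ)⁻¹ * ε := by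
  have hp1 : (1 : ℝ) < p := by exact_mod_cast hp.out.one_lt
  have hε0 : 0 ≤ ε := le_trans (norm_nonneg _) huv
  have hε1 : ε ≤ 1 := by
    refine hε.trans ?_
    calc (p : ℝ) ^ (-1 / ((p : ℝ) - 1)) ≤ (p : ℝ) ^ (0 : ℝ) := by
          apply Real.rpow_le_rpow_of_exponent_le hp1.le
          apply div_nonpos_of_nonpos_of_nonneg <;> linarith
      _ = 1 := Real.rpow_zero _
  have hpinv0 : (0 : ℝ) ≤ (p : ℝ)⁻¹ * ε := by positivity
  have hεpow : ε ^ (p - 1) ≤ (p : ℝ)⁻¹ := by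
    calc ε ^ (p - 1) ≤ ((p : ℝ) ^ (-1 / ((p : ℝ) - 1))) ^ (p - 1) := by
          exact pow_le_pow_left₀ hε0 hε _
      _ = (p : ℝ)⁻¹ := by
          rw [← Real.rpow_natCast ((p : ℝ) ^ (-1 / ((p : ℝ) - 1))), ← Real.rpow_mul (by positivity)]
          have hc : ((p - 1 : ℕ) : ℝ) = (p : ℝ) - 1 := by
            have := hp.out.one_lt
            push_cast [Nat.cast_sub (by omega : 1 ≤ p)]; ring
          rw [hc, div_mul_cancel₀ (-1) (by linarith), Real.rpow_neg_one]
  have key : u ^ p = ∑ k ∈ Finset.range (p + 1), (u - v) ^ k * v ^ (p - k) * (p.choose k) := by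
    conv_lhs => rw [show u = (u - v) + v by ring, add_pow]
  have hsplit : u ^ p - v ^ p
      = ∑ k ∈ Finset.range p, (u - v) ^ (k + 1) * v ^ (p - (k + 1)) * (p.choose (k + 1)) := by
    rw [key, Finset.sum_range_succ']
    simp
  rw [hsplit]
  refine aux_norm_sum_le hna _ _ hpinv0 ?_
  intro k hk
  rw [Finset.mem_range] at hk
  show ‖(u - v) ^ (k + 1) * v ^ (p - (k + 1)) * (p.choose (k + 1) : K)‖ ≤ _
  rw [norm_mul, norm_mul, norm_pow, norm_pow]
  have hvpow : ‖v‖ ^ (p - (k + 1)) ≤ 1 := pow_le_one₀ (norm_nonneg _) hv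
  rcases eq_or_lt_of_le (Nat.succ_le_of_lt hk) with heq | hlt
  · -- k + 1 = p : term is (u-v)^p
    have hch : p.choose (k + 1) = 1 := by rw [← heq]; exact Nat.choose_self _
    have hkk : k = p - 1 := by omega
    rw [hch, Nat.cast_one, norm_one, mul_one]
    calc ‖u - v‖ ^ (k + 1) * ‖v‖ ^ (p - (k + 1))
        ≤ ε ^ (k + 1) * 1 := by
          gcongr
      _ = ε ^ k * ε := by rw [mul_one, pow_succ]
      _ ≤ (p : ℝ)⁻¹ * ε := by gcongr; rw [hkk]; exact hεpow
  · -- k + 1 < p : p divides the binomial coefficient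
    obtain ⟨m, hm⟩ := hp.out.dvd_choose_self (by omega) hlt
    have hchoose : ‖(p.choose (k + 1) : K)‖ ≤ (p : ℝ)⁻¹ := by
      rw [hm]
      push_cast
      rw [norm_mul]
      calc ‖(p : K)‖ * ‖(m : K)‖ ≤ (p : ℝ)⁻¹ * 1 := by
            gcongr; exact aux_norm_natCast_le_one hna m
        _ = (p : ℝ)⁻¹ := mul_one _
    calc ‖u - v‖ ^ (k + 1) * ‖v‖ ^ (p - (k + 1)) * ‖(p.choose (k + 1) : K)‖
        ≤ ε ^ (k + 1) * 1 * (p : ℝ)⁻¹ := by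
          gcongr
      _ = ε ^ (k + 1) * (p : ℝ)⁻¹ := by ring
      _ ≤ ε ^ 1 * (p : ℝ)⁻¹ := by
          exact mul_le_mul_of_nonneg_right
            (pow_le_pow_of_le_one hε0 hε1 (Nat.le_add_left 1 k)) (by positivity)
      _ = (p : ℝ)⁻¹ * ε := by ring

lemma aux_pow_pk (p : ℕ) [hp : Fact p.Prime]
    (hna : IsNonarchimedean (fun x : K => ‖x‖))
    (hpK : ‖(p : K)‖ ≤ (p : ℝ)⁻¹)
    (u v : K) (hu : ‖u‖ ≤ 1) (hv : ‖v‖ ≤ 1)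
    (ε : ℝ) (huv : ‖u - v‖ ≤ ε) (hε : ε ≤ (p : ℝ) ^ (-1 / ((p : ℝ) - 1))) (k : ℕ) :
    ‖u ^ p ^ k - v ^ p ^ k‖ ≤ ((p : ℝ)⁻¹) ^ k * ε := by
  have hε0 : 0 ≤ ε := le_trans (norm_nonneg _) huv
  have hp1 : (1 : ℝ) ≤ p := by exact_mod_cast hp.out.one_lt.le
  have hpi1 : (p : ℝ)⁻¹ ≤ 1 := inv_le_one_of_one_le₀ hp1
  have hpi0 : (0 : ℝ) ≤ (p : ℝ)⁻¹ := by positivity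
  induction k with
  | zero => simpa
  | succ n ih =>
    have hun : ‖u ^ p ^ n‖ ≤ 1 := by
      rw [norm_pow]; exact pow_le_one₀ (norm_nonneg _) hu
    have hvn : ‖v ^ p ^ n‖ ≤ 1 := by
      rw [norm_pow]; exact pow_le_one₀ (norm_nonneg _) hv
    have hε' : ((p : ℝ)⁻¹) ^ n * ε ≤ (p : ℝ) ^ (-1 / ((p : ℝ) - 1)) := by
      calc ((p : ℝ)⁻¹) ^ n * ε ≤ 1 * ε := by
            gcongr; exact pow_le_one₀ hpi0 hpi1
        _ = ε := one_mul _
        _ ≤ _ := hε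
    have step := aux_pow_p_step p hna hpK (u ^ p ^ n) (v ^ p ^ n) hun hvn
      (((p : ℝ)⁻¹) ^ n * ε) ih hε'
    rw [← pow_mul, ← pow_mul, ← pow_succ] at step
    calc ‖u ^ p ^ (n + 1) - v ^ p ^ (n + 1)‖
        ≤ (p : ℝ)⁻¹ * (((p : ℝ)⁻¹) ^ n * ε) := step
      _ = ((p : ℝ)⁻¹) ^ (n + 1) * ε := by ring

end aux

/-- if `‖u‖ ≤ 1`, `‖v‖ ≤ 1` and `‖u - v‖ ≤ ε ≤ p^{-1/(p-1)}`,
then `‖uⁱ/i - vⁱ/i‖ ≤ ε` for every integer `i ≥ 1` (and `(i : K) ≠ 0`). -/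
theorem log_term_close (p : ℕ) [Fact p.Prime]
    (K : Type*) [NormedField K] [CompleteSpace K]
    [Algebra ℚ_[p] K]
    (hna : IsNonarchimedean (fun x : K => ‖x‖))
    (hiso : ∀ x : ℚ_[p], ‖algebraMap ℚ_[p] K x‖ = ‖x‖)
    (u v : K) (hu : ‖u‖ ≤ 1) (hv : ‖v‖ ≤ 1)
    (ε : ℝ) (huv : ‖u - v‖ ≤ ε) (hε : ε ≤ (p : ℝ) ^ (-1 / ((p : ℝ) - 1))) :
    ∀ i : ℕ, 1 ≤ i → (i : K) ≠ 0 ∧ ‖u ^ i / (i : K) - v ^ i / (i : K)‖ ≤ ε := by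
  have hp : Fact p.Prime := inferInstance
  have hp0 : (0 : ℝ) < p := by exact_mod_cast hp.out.pos
  -- the norm of naturals in K agrees with the p-adic norm
  have hnorm : ∀ n : ℕ, ‖(n : K)‖ = ‖(n : ℚ_[p])‖ := by
    intro n
    rw [← map_natCast (algebraMap ℚ_[p] K) n, hiso]
  have hpK : ‖(p : K)‖ ≤ (p : ℝ)⁻¹ := by
    rw [hnorm p, Padic.norm_p]
  intro i hi
  have hi0 : (i : ℚ_[p]) ≠ 0 := by exact_mod_cast (by omega : i ≠ 0)
  set k := padicValNat p i with hk
  have hvaliK : ‖(i : K)‖ = ((p : ℝ)⁻¹) ^ k := by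
    rw [hnorm i, Padic.norm_eq_zpow_neg_valuation hi0, Padic.valuation_natCast, hk,
      zpow_neg, zpow_natCast, inv_pow]
  have hiK : (i : K) ≠ 0 := by
    intro h
    rw [h, norm_zero] at hvaliK
    have : (0 : ℝ) < ((p : ℝ)⁻¹) ^ k := by positivity
    linarith [hvaliK ▸ this]
  refine ⟨hiK, ?_⟩
  -- write i = p^k * m
  obtain ⟨m, hm⟩ := pow_padicValNat_dvd (p := p) (n := i)
  have hnum : ‖u ^ i - v ^ i‖ ≤ ((p : ℝ)⁻¹) ^ k * ε := by
    have hun : ‖u ^ p ^ k‖ ≤ 1 := by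
      rw [norm_pow]; exact pow_le_one₀ (norm_nonneg _) hu
    have hvn : ‖v ^ p ^ k‖ ≤ 1 := by
      rw [norm_pow]; exact pow_le_one₀ (norm_nonneg _) hv
    calc ‖u ^ i - v ^ i‖ = ‖(u ^ p ^ k) ^ m - (v ^ p ^ k) ^ m‖ := by
          rw [← pow_mul, ← pow_mul, ← hm]
      _ ≤ ‖u ^ p ^ k - v ^ p ^ k‖ := aux_pow_sub_pow hna _ _ hun hvn m
      _ ≤ ((p : ℝ)⁻¹) ^ k * ε := aux_pow_pk p hna hpK u v hu hv ε huv hε k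
  have hiKpos : 0 < ‖(i : K)‖ := norm_pos_iff.mpr hiK
  rw [div_sub_div_same, norm_div, hvaliK]
  rw [div_le_iff₀ (by positivity)]
  calc ‖u ^ i - v ^ i‖ ≤ ((p : ℝ)⁻¹) ^ k * ε := hnum
    _ = ε * ((p : ℝ)⁻¹) ^ k := by ring
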